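/- Let λ > −1/2, α > 0, 0 < β < α, δ > 0, and set γ = √(α² − β²). Then δβK_{λ+1}(δγ)/(γK_λ(δγ)) < (β/γ²)·[λ + 1/2 + √((λ + 1/2)² + δ²γ²)]. Equality holds if λ = −1/2 and the inequality is reversed for λ < −1/2. -/

import Mathlib

open Real MeasureTheory

open Set Filter Topology


lemma cosh_le_exp_abs (y : ℝ) : Real.cosh y ≤ Real.exp |y| := by
  rw [Real.cosh_eq]
  have h1 : Real.exp y ≤ Real.exp |y| := Real.exp_le_exp.2 (le_abs_self y)
  have h2 : Real.exp (-y) ≤ Real.exp |y| := Real.exp_le_exp.2 (neg_le_abs y)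
  linarith

lemma abs_sinh_le_exp_abs (y : ℝ) : |Real.sinh y| ≤ Real.exp |y| := by
  rw [Real.sinh_eq]
  have h1 : Real.exp y ≤ Real.exp |y| := Real.exp_le_exp.2 (le_abs_self y)
  have h2 : Real.exp (-y) ≤ Real.exp |y| := Real.exp_le_exp.2 (neg_le_abs y)
  have h3 := Real.exp_pos y
  have h4 := Real.exp_pos (-y)
  rw [abs_le]
  constructor <;> [nlinarith; nlinarith]

lemma half_exp_le_cosh (y : ℝ) : Real.exp y / 2 ≤ Real.cosh y := by
  rw [Real.cosh_eq]; nlinarith [Real.exp_pos (-y)]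

/-- key quadratic bound: for `t ≥ 0`, `a*t - x*cosh t ≤ C - t` with `C = 2*(|a|+1)^2/x`. -/
lemma key_exp_bound {x : ℝ} (hx : 0 < x) (a t : ℝ) (ht : 0 ≤ t) :
    a * t - x * Real.cosh t ≤ 2 * (|a| + 1) ^ 2 / x - t := by
  have h1 : Real.exp t / 2 ≤ Real.cosh t := half_exp_le_cosh t
  have h2 : t ^ 2 / 4 ≤ Real.exp t := by
    have hh := Real.add_one_le_exp (t / 2)
    have he : Real.exp (t/2) * Real.exp (t/2) = Real.exp t := by
      rw [← Real.exp_add]; ring_nf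
    nlinarith [Real.exp_nonneg (t/2)]
  have h3 : x * (t ^ 2 / 8) ≤ x * Real.cosh t := by
    apply mul_le_mul_of_nonneg_left _ hx.le
    nlinarith
  have h4 : (|a| + 1) * t ≤ x / 8 * t ^ 2 + 2 / x * (|a| + 1) ^ 2 := by
    set s := Real.sqrt (x/8) with hs
    set r := Real.sqrt (2/x) with hr
    set m := |a| + 1 with hm
    have e1 : s ^ 2 = x/8 := Real.sq_sqrt (by positivity)
    have e2 : r ^ 2 = 2/x := Real.sq_sqrt (by positivity)
    have e3 : s * r = 1/2 := by
      rw [hs, hr, ← Real.sqrt_mul (by positivity),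
        show x / 8 * (2 / x) = 1/4 by field_simp; ring,
        show (1:ℝ)/4 = (1/2)^2 by norm_num, Real.sqrt_sq (by norm_num)]
    have expand : (s*t - r*m)^2 = x/8*t^2 - m*t + 2/x*m^2 := by
      rw [show (s*t - r*m)^2 = s^2*t^2 - 2*(s*r)*(t*m) + r^2*m^2 from by ring, e1, e2, e3]
      ring
    have h0 := sq_nonneg (s*t - r*m)
    rw [expand] at h0
    linarith
  have h5 : a * t ≤ (|a| + 1) * t - t := by
    nlinarith [le_abs_self a, mul_le_mul_of_nonneg_right (le_abs_self a) ht]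
  have hfin : 2 / x * (|a| + 1) ^ 2 = 2 * (|a| + 1) ^ 2 / x := by ring
  nlinarith

/-- the main integrability workhorse -/
lemma integrable_exp_mul_cosh {x : ℝ} (hx : 0 < x) (a : ℝ) :
    IntegrableOn (fun t => Real.exp (a * t - x * Real.cosh t)) (Ioi (0:ℝ)) := by
  have hcont : Continuous fun t => Real.exp (a * t - x * Real.cosh t) := by continuity
  apply Integrable.mono (g := fun t => Real.exp (2 * (|a| + 1) ^ 2 / x) * Real.exp (-1 * t))
  · exact (exp_neg_integrableOn_Ioi 0 one_pos).const_mul _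
  · exact hcont.aestronglyMeasurable.restrict
  · filter_upwards [ae_restrict_mem measurableSet_Ioi] with t ht
    rw [Real.norm_eq_abs, abs_of_pos (Real.exp_pos _), Real.norm_eq_abs,
      abs_of_pos (by positivity), ← Real.exp_add]
    apply Real.exp_le_exp.2
    have := key_exp_bound hx a t (le_of_lt ht)
    linarith

/-- integrability from a pointwise bound by the workhorse -/
lemma integrable_of_exp_bound {f : ℝ → ℝ} {x : ℝ} (hx : 0 < x) (a : ℝ)
    (hf : Continuous f)
    (hb : ∀ t, 0 < t → |f t| ≤ Real.exp (a * t - x * Real.cosh t)) :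
    IntegrableOn f (Ioi (0:ℝ)) := by
  apply Integrable.mono (integrable_exp_mul_cosh hx a) hf.aestronglyMeasurable.restrict
  filter_upwards [ae_restrict_mem measurableSet_Ioi] with t ht
  rw [Real.norm_eq_abs, Real.norm_eq_abs, abs_of_pos (Real.exp_pos _)]
  exact hb t ht


/-- Modified Bessel function of the second kind. -/
noncomputable def besselK (ν x : ℝ) : ℝ :=
  ∫ t in Set.Ioi (0:ℝ), Real.exp (-x * Real.cosh t) * Real.cosh (ν * t)

lemma besselK_integrableOn {x : ℝ} (hx : 0 < x) (ν : ℝ) :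
    IntegrableOn (fun t => Real.exp (-x * Real.cosh t) * Real.cosh (ν * t)) (Ioi (0:ℝ)) := by
  apply integrable_of_exp_bound hx |ν| (by continuity)
  intro t ht
  rw [abs_of_pos (by positivity),
    show |ν| * t - x * Real.cosh t = |ν| * t + -(x * Real.cosh t) by ring,
    Real.exp_add, neg_mul, mul_comm]
  gcongr
  calc Real.cosh (ν * t) ≤ Real.exp |ν * t| := cosh_le_exp_abs _
    _ = Real.exp (|ν| * t) := by rw [abs_mul, abs_of_pos ht]

lemma besselK_pos {x : ℝ} (hx : 0 < x) (ν : ℝ) : 0 < besselK ν x := by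
  rw [besselK]
  rw [setIntegral_pos_iff_support_of_nonneg_ae]
  · have hs : Function.support (fun t => Real.exp (-x * Real.cosh t) * Real.cosh (ν * t)) = Set.univ := by
      ext t; simp only [Function.mem_support, Set.mem_univ, iff_true]
      positivity
    rw [hs, Set.univ_inter]
    simp [Real.volume_Ioi]
  · filter_upwards with t
    positivity
  · exact besselK_integrableOn hx ν

lemma besselK_neg (ν x : ℝ) : besselK (-ν) x = besselK ν x := by
  unfold besselK
  congr 1; ext t; rw [show -ν * t = -(ν * t) by ring, Real.cosh_neg]

lemma integrableOn_cosh_mul {x : ℝ} (hx : 0 < x) (ν : ℝ) :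
    IntegrableOn (fun t => Real.cosh t * (Real.exp (-((x/2) * Real.cosh t)) * Real.cosh (ν * t)))
      (Ioi (0:ℝ)) := by
  apply integrable_of_exp_bound (f := fun t => Real.cosh t * (Real.exp (-((x/2) * Real.cosh t)) * Real.cosh (ν * t))) (half_pos hx) (|ν| + 1) (by continuity)
  intro t ht
  rw [abs_of_pos (by positivity),
    show (|ν| + 1) * t - x/2 * Real.cosh t = t + (|ν| * t + -(x/2 * Real.cosh t)) by ring,
    Real.exp_add, Real.exp_add]
  have h1 : Real.cosh t ≤ Real.exp t := by
    calc Real.cosh t ≤ Real.exp |t| := cosh_le_exp_abs t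
      _ = Real.exp t := by rw [abs_of_pos ht]
  have h2 : Real.cosh (ν * t) ≤ Real.exp (|ν| * t) := by
    calc Real.cosh (ν * t) ≤ Real.exp |ν * t| := cosh_le_exp_abs _
      _ = Real.exp (|ν| * t) := by rw [abs_mul, abs_of_pos ht]
  have h3 : (0:ℝ) < Real.exp (-(x/2 * Real.cosh t)) := Real.exp_pos _
  calc Real.cosh t * (Real.exp (-(x/2 * Real.cosh t)) * Real.cosh (ν * t))
      ≤ Real.exp t * (Real.exp (-(x/2 * Real.cosh t)) * Real.exp (|ν| * t)) := by
        apply mul_le_mul h1 _ (by positivity) (Real.exp_nonneg t)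
        exact mul_le_mul_of_nonneg_left h2 h3.le
    _ = Real.exp t * (Real.exp (|ν| * t) * Real.exp (-(x/2 * Real.cosh t))) := by ring

lemma besselK_hasDerivAt {x : ℝ} (hx : 0 < x) (ν : ℝ) :
    HasDerivAt (fun y => besselK ν y)
      (-((besselK (ν+1) x + besselK (ν-1) x) / 2)) x := by
  have key := hasDerivAt_integral_of_dominated_loc_of_deriv_le (μ := volume.restrict (Ioi (0:ℝ)))
    (F := fun y t => Real.exp (-y * Real.cosh t) * Real.cosh (ν * t))
    (F' := fun y t => -(Real.cosh t * (Real.exp (-y * Real.cosh t) * Real.cosh (ν * t))))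
    (x₀ := x) (s := Metric.ball x (x/2))
    (bound := fun t => Real.cosh t * (Real.exp (-((x/2) * Real.cosh t)) * Real.cosh (ν * t)))
    (Metric.ball_mem_nhds x (half_pos hx))
    (Filter.Eventually.of_forall fun y =>
      (Continuous.aestronglyMeasurable (by continuity)).restrict)
    (besselK_integrableOn hx ν)
    (Continuous.aestronglyMeasurable (by continuity)).restrict
    ?_ (integrableOn_cosh_mul hx ν) ?_
  · rcases key with ⟨_, hd⟩
    have heq : (∫ t in Ioi (0:ℝ), -(Real.cosh t * (Real.exp (-x * Real.cosh t) * Real.cosh (ν * t))))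
        = -((besselK (ν+1) x + besselK (ν-1) x) / 2) := by
      have hint : ∀ t : ℝ, -(Real.cosh t * (Real.exp (-x * Real.cosh t) * Real.cosh (ν * t)))
          = -(1/2) * (Real.exp (-x * Real.cosh t) * Real.cosh ((ν+1) * t))
            + -(1/2) * (Real.exp (-x * Real.cosh t) * Real.cosh ((ν-1) * t)) := by
        intro t
        have : Real.cosh ((ν+1) * t) + Real.cosh ((ν-1) * t)
            = 2 * (Real.cosh (ν*t) * Real.cosh t) := by
          rw [show (ν+1) * t = ν*t + t by ring, show (ν-1) * t = ν*t - t by ring,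
            Real.cosh_add, Real.cosh_sub]
          ring
        nlinarith [Real.exp_pos (-x * Real.cosh t)]
      rw [show (fun t => -(Real.cosh t * (Real.exp (-x * Real.cosh t) * Real.cosh (ν * t))))
          = fun t => -(1/2) * (Real.exp (-x * Real.cosh t) * Real.cosh ((ν+1) * t))
            + -(1/2) * (Real.exp (-x * Real.cosh t) * Real.cosh ((ν-1) * t)) from funext hint]
      rw [integral_add ((besselK_integrableOn hx (ν+1)).const_mul _)
        ((besselK_integrableOn hx (ν-1)).const_mul _), integral_const_mul, integral_const_mul]
      unfold besselK; ring
    rw [← heq]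
    exact hd
  · filter_upwards [ae_restrict_mem measurableSet_Ioi] with t ht y hy
    rw [Real.norm_eq_abs, abs_neg, abs_of_pos (by positivity)]
    have hy2 : x/2 < y := by
      rw [Metric.mem_ball, Real.dist_eq, abs_lt] at hy
      linarith
    have : Real.exp (-y * Real.cosh t) ≤ Real.exp (-(x/2 * Real.cosh t)) := by
      apply Real.exp_le_exp.2
      rw [neg_mul]
      have := Real.cosh_pos t
      nlinarith
    have hc := (Real.cosh_pos t).le
    have hc2 := (Real.cosh_pos (ν * t)).le
    gcongr
  · filter_upwards with t y hy
    have h : HasDerivAt (fun y : ℝ => Real.exp (-y * Real.cosh t) * Real.cosh (ν * t))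
        ((Real.exp (-y * Real.cosh t) * ((-1) * Real.cosh t)) * Real.cosh (ν * t)) y := by
      have h1 : HasDerivAt (fun y : ℝ => -y * Real.cosh t) ((-1) * Real.cosh t) y := by
        simpa using ((hasDerivAt_id y).neg.mul_const (Real.cosh t))
      exact (h1.exp).mul_const _
    refine h.congr_deriv ?_
    ring

lemma integrableOn_sinh_sinh {x : ℝ} (hx : 0 < x) (ν : ℝ) :
    IntegrableOn (fun t => Real.exp (-x * Real.cosh t) * (Real.sinh t * Real.sinh (ν * t)))
      (Ioi (0:ℝ)) := by
  apply integrable_of_exp_bound hx (|ν| + 1) (by continuity)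
  intro t ht
  rw [show (|ν| + 1) * t - x * Real.cosh t = -(x * Real.cosh t) + (t + |ν| * t) by ring,
    Real.exp_add, Real.exp_add, abs_mul, abs_of_pos (Real.exp_pos _), ← neg_mul]
  apply mul_le_mul_of_nonneg_left _ (Real.exp_nonneg _)
  calc |Real.sinh t * Real.sinh (ν * t)| = |Real.sinh t| * |Real.sinh (ν * t)| := abs_mul _ _
    _ ≤ Real.exp |t| * Real.exp |ν * t| := by
        apply mul_le_mul (abs_sinh_le_exp_abs t) (abs_sinh_le_exp_abs _) (abs_nonneg _)
          (Real.exp_nonneg _)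
    _ = Real.exp t * Real.exp (|ν| * t) := by rw [abs_of_pos ht, abs_mul, abs_of_pos ht]

lemma besselK_recurrence {x : ℝ} (hx : 0 < x) (ν : ℝ) :
    besselK (ν+1) x - besselK (ν-1) x = 2*ν/x * besselK ν x := by
  set A : ℝ → ℝ := fun t => Real.exp (-x * Real.cosh t) * Real.cosh (ν * t) with hA
  set B : ℝ → ℝ := fun t => Real.exp (-x * Real.cosh t) * (Real.sinh t * Real.sinh (ν * t)) with hB
  set g : ℝ → ℝ := fun t => Real.exp (-x * Real.cosh t) * Real.sinh (ν * t) with hg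
  have hgcont : Continuous g := by continuity
  have hderiv : ∀ t : ℝ, HasDerivAt g (ν * A t - x * B t) t := by
    intro t
    have h1 : HasDerivAt (fun t => Real.exp (-x * Real.cosh t))
        (Real.exp (-x * Real.cosh t) * (-x * Real.sinh t)) t :=
      ((Real.hasDerivAt_cosh t).const_mul (-x)).exp
    have h2 : HasDerivAt (fun t => Real.sinh (ν * t)) (Real.cosh (ν * t) * ν) t := by
      simpa using ((hasDerivAt_id t).const_mul ν).sinh
    refine (h1.mul h2).congr_deriv ?_
    simp only [hA, hB]
    ring
  have hint : IntegrableOn (fun t => ν * A t - x * B t) (Ioi (0:ℝ)) :=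
    ((besselK_integrableOn hx ν).const_mul ν).sub ((integrableOn_sinh_sinh hx ν).const_mul x)
  have htend : Tendsto g atTop (𝓝 0) := by
    apply squeeze_zero_norm' (a := fun t : ℝ => Real.exp (2 * (|ν| + 1) ^ 2 / x) * Real.exp (-1 * t))
    · filter_upwards [eventually_ge_atTop (0:ℝ)] with t ht
      rw [Real.norm_eq_abs, hg, ← Real.exp_add, abs_mul, abs_of_pos (Real.exp_pos _)]
      have h1 : |Real.sinh (ν * t)| ≤ Real.exp (|ν| * t) := by
        calc |Real.sinh (ν * t)| ≤ Real.exp |ν * t| := abs_sinh_le_exp_abs _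
          _ = Real.exp (|ν| * t) := by rw [abs_mul, abs_of_nonneg ht]
      calc Real.exp (-x * Real.cosh t) * |Real.sinh (ν * t)|
          ≤ Real.exp (-x * Real.cosh t) * Real.exp (|ν| * t) := by
            exact mul_le_mul_of_nonneg_left h1 (Real.exp_nonneg _)
        _ = Real.exp (|ν| * t - x * Real.cosh t) := by rw [← Real.exp_add]; ring_nf
        _ ≤ Real.exp (2 * (|ν| + 1) ^ 2 / x + -1 * t) := by
            apply Real.exp_le_exp.2
            have h5 := key_exp_bound hx |ν| t ht
            rw [abs_abs] at h5
            linarith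
    · rw [show (0:ℝ) = Real.exp (2 * (|ν| + 1) ^ 2 / x) * 0 by ring]
      exact (Real.tendsto_exp_atBot.comp (tendsto_id.const_mul_atTop_of_neg (by norm_num))).const_mul _
  have hftc := integral_Ioi_of_hasDerivAt_of_tendsto
    (hgcont.continuousWithinAt) (fun t _ => hderiv t) hint htend
  have hg0 : g 0 = 0 := by simp [hg]
  rw [hg0, sub_zero] at hftc
  have hsplit : ∫ t in Ioi (0:ℝ), (ν * A t - x * B t)
      = ν * besselK ν x - x * ∫ t in Ioi (0:ℝ), B t := by
    rw [integral_sub ((besselK_integrableOn hx ν).const_mul ν)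
      ((integrableOn_sinh_sinh hx ν).const_mul x), integral_const_mul, integral_const_mul]
    rfl
  rw [hsplit] at hftc
  have hBval : ∫ t in Ioi (0:ℝ), B t = ν / x * besselK ν x := by
    field_simp
    linarith
  have hdiff : besselK (ν+1) x - besselK (ν-1) x = 2 * ∫ t in Ioi (0:ℝ), B t := by
    unfold besselK
    rw [← integral_const_mul, ← integral_sub (besselK_integrableOn hx (ν+1))
      (besselK_integrableOn hx (ν-1))]
    congr 1; ext t
    rw [show (ν+1) * t = ν*t + t by ring, show (ν-1) * t = ν*t - t by ring,
      Real.cosh_add, Real.cosh_sub]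
    simp only [hB]
    ring
  rw [hdiff, hBval]
  ring

lemma F_hasDerivAt {x : ℝ} (hx : 0 < x) (ν : ℝ) :
    HasDerivAt (fun y => y * (besselK (ν+1) y ^ 2 - besselK ν y ^ 2)
      - (2*ν+1) * (besselK (ν+1) y * besselK ν y))
      ((2*ν+1) * besselK (ν+1) x * besselK ν x / x) x := by
  have hP := besselK_hasDerivAt hx (ν+1)
  have hQ := besselK_hasDerivAt hx ν
  rw [show ν+1-1 = ν by ring] at hP
  have h := ((hasDerivAt_id x).mul ((hP.pow 2).sub (hQ.pow 2))).sub
    ((hP.mul hQ).const_mul (2*ν+1))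
  refine h.congr_deriv ?_
  have r1 : besselK (ν+1+1) x = besselK ν x + 2*(ν+1)/x * besselK (ν+1) x := by
    have h2 := besselK_recurrence hx (ν+1)
    rw [show ν+1-1 = ν by ring] at h2
    linarith
  have r2 : besselK (ν-1) x = besselK (ν+1) x - 2*ν/x * besselK ν x := by
    have h2 := besselK_recurrence hx ν
    linarith
  rw [r1, r2]
  simp only [id, Pi.sub_apply, Pi.pow_apply]
  field_simp
  ring

lemma besselK_le_of_one_le {ν x : ℝ} (hx : 1 ≤ x) :
    besselK ν x ≤ Real.exp (1 - x) * besselK ν 1 := by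
  unfold besselK
  rw [← integral_const_mul]
  apply setIntegral_mono_on (besselK_integrableOn (by linarith) ν)
    (((besselK_integrableOn one_pos ν).const_mul _)) measurableSet_Ioi
  intro t _
  rw [← mul_assoc, ← Real.exp_add]
  apply mul_le_mul_of_nonneg_right _ (Real.cosh_pos _).le
  apply Real.exp_le_exp.2
  have h1 := Real.one_le_cosh t
  nlinarith

lemma F_tendsto_zero (ν : ℝ) :
    Tendsto (fun x => x * (besselK (ν+1) x ^ 2 - besselK ν x ^ 2)
      - (2*ν+1) * (besselK (ν+1) x * besselK ν x)) atTop (𝓝 0) := by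
  set C : ℝ := max (besselK (ν+1) 1) (besselK ν 1) with hC
  have hCpos : 0 < C := lt_max_of_lt_left (besselK_pos one_pos (ν+1))
  apply squeeze_zero_norm' (a := fun x : ℝ =>
    (2*x + |2*ν+1|) * (C^2 * (Real.exp (1-x))^2))
  · filter_upwards [eventually_ge_atTop (1:ℝ)] with x hx
    have hx0 : 0 < x := by linarith
    have hP0 := besselK_pos hx0 (ν+1)
    have hQ0 := besselK_pos hx0 ν
    have hP : besselK (ν+1) x ≤ Real.exp (1-x) * C :=
      (besselK_le_of_one_le hx).trans (by
        apply mul_le_mul_of_nonneg_left (le_max_left _ _) (Real.exp_nonneg _))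
    have hQ : besselK ν x ≤ Real.exp (1-x) * C :=
      (besselK_le_of_one_le hx).trans (by
        apply mul_le_mul_of_nonneg_left (le_max_right _ _) (Real.exp_nonneg _))
    have hPQ : besselK (ν+1) x * besselK ν x ≤ C^2 * (Real.exp (1-x))^2 := by
      nlinarith
    have hP2 : besselK (ν+1) x ^ 2 ≤ C^2 * (Real.exp (1-x))^2 := by nlinarith
    have hQ2 : besselK ν x ^ 2 ≤ C^2 * (Real.exp (1-x))^2 := by nlinarith
    set CE := C^2 * (Real.exp (1-x))^2 with hCE
    have hCE0 : 0 ≤ CE := by positivity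
    have h3 : x * besselK (ν+1) x ^ 2 ≤ x * CE := mul_le_mul_of_nonneg_left hP2 hx0.le
    have h4 : x * besselK ν x ^ 2 ≤ x * CE := mul_le_mul_of_nonneg_left hQ2 hx0.le
    have h5 : |2*ν+1| * (besselK (ν+1) x * besselK ν x) ≤ |2*ν+1| * CE :=
      mul_le_mul_of_nonneg_left hPQ (abs_nonneg _)
    have h6 : -( (2*ν+1) * (besselK (ν+1) x * besselK ν x)) ≤ |2*ν+1| * CE := by
      have : -(2*ν+1) ≤ |2*ν+1| := neg_le_abs _
      nlinarith [mul_pos hP0 hQ0]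
    have h7 : (2*ν+1) * (besselK (ν+1) x * besselK ν x) ≤ |2*ν+1| * CE := by
      have : (2*ν+1) ≤ |2*ν+1| := le_abs_self _
      nlinarith [mul_pos hP0 hQ0]
    have h8 : 0 ≤ x * besselK (ν+1) x ^ 2 := by positivity
    have h9 : 0 ≤ x * besselK ν x ^ 2 := by positivity
    have h10 : 0 ≤ x * CE := by positivity
    rw [Real.norm_eq_abs, abs_le]
    constructor <;> nlinarith
  · have key : Tendsto (fun x : ℝ => (2*x + |2*ν+1|) * (C^2 * (Real.exp (1-x))^2))
        atTop (𝓝 0) := by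
      have h1 : (fun x : ℝ => (2*x + |2*ν+1|) * (C^2 * (Real.exp (1-x))^2))
          = fun x : ℝ => C^2 * Real.exp 2 * (2 * (x * Real.exp (-x) * Real.exp (-x))
            + |2*ν+1| * (Real.exp (-x) * Real.exp (-x))) := by
        ext x
        rw [show (Real.exp (1-x))^2 = Real.exp 2 * (Real.exp (-x) * Real.exp (-x)) by
          rw [← Real.exp_add, ← Real.exp_add, sq, ← Real.exp_add]; ring_nf]
        ring
      rw [h1, show (0:ℝ) = C^2 * Real.exp 2 * (2 * (0 * 0) + |2*ν+1| * (0 * 0)) by ring]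
      have he : Tendsto (fun x : ℝ => Real.exp (-x)) atTop (𝓝 0) :=
        Real.tendsto_exp_atBot.comp tendsto_neg_atTop_atBot
      have hxe : Tendsto (fun x : ℝ => x * Real.exp (-x)) atTop (𝓝 0) := by
        simpa using Real.tendsto_pow_mul_exp_neg_atTop_nhds_zero 1
      exact (((hxe.mul he).const_mul 2).add ((he.mul he).const_mul _)).const_mul _
    convert key using 2 <;> ring

lemma F_neg {ν x : ℝ} (hν : 0 < 2*ν+1) (hx : 0 < x) :
    x * (besselK (ν+1) x ^ 2 - besselK ν x ^ 2)
      - (2*ν+1) * (besselK (ν+1) x * besselK ν x) < 0 := by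
  set F : ℝ → ℝ := fun y => y * (besselK (ν+1) y ^ 2 - besselK ν y ^ 2)
      - (2*ν+1) * (besselK (ν+1) y * besselK ν y) with hF
  have hmono : StrictMonoOn F (Ici x) := by
    apply strictMonoOn_of_deriv_pos (convex_Ici x)
    · intro y hy
      have hy0 : 0 < y := lt_of_lt_of_le hx hy
      exact (F_hasDerivAt hy0 ν).differentiableAt.continuousAt.continuousWithinAt
    · intro y hy
      rw [interior_Ici] at hy
      have hy0 : 0 < y := hx.trans hy
      rw [(F_hasDerivAt hy0 ν).deriv]
      have := besselK_pos hy0 (ν+1)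
      have := besselK_pos hy0 ν
      positivity
  have h1 : F x < F (x+1) := hmono (le_refl x : x ∈ Ici x) (by simp : x+1 ∈ Ici x) (by linarith)
  have h2 : F (x+1) ≤ 0 := by
    apply ge_of_tendsto (F_tendsto_zero ν)
    filter_upwards [eventually_ge_atTop (x+1)] with y hy
    rcases eq_or_lt_of_le hy with rfl | hlt
    · exact le_refl _
    · exact (hmono (by simp : x+1 ∈ Ici x) (by simp only [mem_Ici]; linarith) hlt).le
  have h0 : F x < 0 := lt_of_lt_of_le h1 h2
  simpa only [hF] using h0

lemma ratio_lt {ν x : ℝ} (hν : -(1/2 : ℝ) < ν) (hx : 0 < x) :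
    x * besselK (ν+1) x < (ν + 1/2 + Real.sqrt ((ν+1/2)^2 + x^2)) * besselK ν x := by
  set P := besselK (ν+1) x with hP
  set Q := besselK ν x with hQ
  have hP0 : 0 < P := besselK_pos hx (ν+1)
  have hQ0 : 0 < Q := besselK_pos hx ν
  set μ := ν + 1/2 with hμ
  set s := Real.sqrt (μ^2 + x^2) with hs
  have hs2 : s^2 = μ^2 + x^2 := Real.sq_sqrt (by positivity)
  have hs0 : 0 ≤ s := Real.sqrt_nonneg _
  have hsμ : |μ| < s := by
    rw [← Real.sqrt_sq_eq_abs, hs]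
    apply Real.sqrt_lt_sqrt (sq_nonneg μ)
    nlinarith
  have key := F_neg (by rw [hμ] at *; linarith : 0 < 2*ν+1) hx
  rw [← hP, ← hQ] at key
  have hquad : (x*P - (μ+s)*Q) * (x*P - (μ-s)*Q) < 0 := by
    have hid : (x*P - (μ+s)*Q) * (x*P - (μ-s)*Q)
        = x * (x * (P^2 - Q^2) - (2*ν+1) * (P*Q)) + (μ^2 + x^2 - s^2)*Q^2 := by
      rw [hμ]; ring
    rw [hid, hs2]
    have : x * (x * (P^2 - Q^2) - (2*ν+1) * (P*Q)) < 0 :=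
      mul_neg_of_pos_of_neg hx (by linarith)
    linarith
  have hfac2 : 0 < x*P - (μ-s)*Q := by
    have h1 : μ - s < 0 := by
      have := neg_abs_le μ
      nlinarith [le_abs_self μ]
    nlinarith
  have hfac1 : x*P - (μ+s)*Q < 0 := by
    by_contra h
    push_neg at h
    nlinarith
  linarith

lemma ratio_gt {ν x : ℝ} (hν : ν < -(1/2:ℝ)) (hx : 0 < x) :
    (ν + 1/2 + Real.sqrt ((ν+1/2)^2 + x^2)) * besselK ν x < x * besselK (ν+1) x := by
  have h := ratio_lt (ν := -1-ν) (show -(1/2:ℝ) < -1-ν by linarith) hx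
  rw [show -1-ν+1 = -ν by ring, besselK_neg] at h
  rw [show -1-ν = -(ν+1) by ring, besselK_neg] at h
  rw [show -(ν+1)+1/2 = -(ν+1/2) by ring, show (-(ν+1/2))^2 = (ν+1/2)^2 by ring] at h
  set μ := ν + 1/2 with hμ
  set s := Real.sqrt (μ^2 + x^2) with hs
  set P := besselK (ν+1) x with hP
  set Q := besselK ν x with hQ
  have hP0 : 0 < P := besselK_pos hx _
  have hQ0 : 0 < Q := besselK_pos hx _
  have hs2 : s^2 = μ^2 + x^2 := Real.sq_sqrt (by positivity)
  have hsμ : |μ| < s := by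
    rw [← Real.sqrt_sq_eq_abs, hs]
    apply Real.sqrt_lt_sqrt (sq_nonneg μ)
    nlinarith
  have hsum : 0 < s + μ := by nlinarith [neg_abs_le μ]
  -- h : x * Q < (-μ + s) * P
  have hmul := mul_lt_mul_of_pos_left h hsum
  nlinarith [mul_pos hx hP0, le_abs_self μ]

theorem stmt_6 (lam α β δ γ : ℝ) (hα : 0 < α) (hβ : 0 < β) (hβα : β < α) (hδ : 0 < δ)
    (hγ : γ = Real.sqrt (α ^ 2 - β ^ 2)) :
    (-(1 / 2) < lam → δ * β * besselK (lam + 1) (δ * γ) / (γ * besselK lam (δ * γ)) <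
      β / γ ^ 2 * (lam + 1 / 2 + Real.sqrt ((lam + 1 / 2) ^ 2 + δ ^ 2 * γ ^ 2))) ∧
    (lam = -(1 / 2) → δ * β * besselK (lam + 1) (δ * γ) / (γ * besselK lam (δ * γ)) =
      β / γ ^ 2 * (lam + 1 / 2 + Real.sqrt ((lam + 1 / 2) ^ 2 + δ ^ 2 * γ ^ 2))) ∧
    (lam < -(1 / 2) → δ * β * besselK (lam + 1) (δ * γ) / (γ * besselK lam (δ * γ)) >
      β / γ ^ 2 * (lam + 1 / 2 + Real.sqrt ((lam + 1 / 2) ^ 2 + δ ^ 2 * γ ^ 2))) := by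
  have hγpos : 0 < γ := by
    rw [hγ]
    apply Real.sqrt_pos.2
    nlinarith
  have hxpos : 0 < δ * γ := mul_pos hδ hγpos
  have hsq : (lam + 1/2)^2 + δ^2*γ^2 = (lam + 1/2)^2 + (δ*γ)^2 := by ring
  have hβγ : 0 < β / γ := by positivity
  refine ⟨fun hν => ?_, fun hν => ?_, fun hν => ?_⟩
  · have h := ratio_lt hν hxpos
    set P := besselK (lam+1) (δ*γ) with hP
    set Q := besselK lam (δ*γ) with hQ
    have hQ0 : 0 < Q := besselK_pos hxpos _
    rw [hsq, div_lt_iff₀ (show 0 < γ*Q by positivity)]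
    set s := Real.sqrt ((lam + 1/2)^2 + (δ*γ)^2) with hs
    have e1 : δ*β*P = β/γ*(δ*γ*P) := by field_simp
    have e2 : β/γ^2*(lam + 1/2 + s)*(γ*Q) = β/γ*((lam + 1/2 + s)*Q) := by
      field_simp
    rw [e1, e2]
    exact mul_lt_mul_of_pos_left h hβγ
  · subst hν
    rw [show (-(1/2:ℝ)+1) = (1/2:ℝ) by norm_num,
      show besselK (-(1/2)) (δ*γ) = besselK (1/2) (δ*γ) from besselK_neg _ _,
      show (-(1/2:ℝ)+1/2)^2 + δ^2*γ^2 = (δ*γ)^2 by ring,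
      Real.sqrt_sq hxpos.le]
    have hK := besselK_pos hxpos (1/2:ℝ)
    field_simp
    ring
  · have h := ratio_gt hν hxpos
    set P := besselK (lam+1) (δ*γ) with hP
    set Q := besselK lam (δ*γ) with hQ
    have hQ0 : 0 < Q := besselK_pos hxpos _
    rw [hsq, gt_iff_lt, lt_div_iff₀ (show 0 < γ*Q by positivity)]
    set s := Real.sqrt ((lam + 1/2)^2 + (δ*γ)^2) with hs
    have e1 : δ*β*P = β/γ*(δ*γ*P) := by field_simp
    have e2 : β/γ^2*(lam + 1/2 + s)*(γ*Q) = β/γ*((lam + 1/2 + s)*Q) := by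
      field_simp
    rw [e1, e2]
    exact mul_lt_mul_of_pos_left h hβγ
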